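/- Let F be a finite field of cardinality q and let Q be a nonzero quadratic form on the F-vector space Fin 4 → F. Let Z be the set of projective points [v] of the projective space of Fin 4 → F with Q(v) = 0. If Z has exactly 9 elements and Z is not contained in the projectivization of any 2-dimensional F-subspace of Fin 4 → F (i.e., the nine points are not all on one projective line), then q = 2. -/

import Mathlib

open Finset QuadraticMap Projectivization
open scoped LinearAlgebra.Projectivization



section aux
variable {F : Type*} [Field F] [Fintype F]
variable {V : Type*} [AddCommGroup V] [Module F V]

noncomputable def zerosEquiv (Q : QuadraticForm F V) :
    {x : V // x ≠ 0 ∧ Q x = 0} ≃ {p : ℙ F V | Q p.rep = 0} × Fˣ := by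
  refine
  { toFun := fun x => (⟨Projectivization.mk F x.1 x.2.1, ?_⟩,
      (Classical.choose (exists_smul_eq_mk_rep F x.1 x.2.1))⁻¹)
    invFun := fun pc => ⟨(pc.2 : F) • pc.1.1.rep, ?_, ?_⟩
    left_inv := ?_
    right_inv := ?_ }
  · -- Q rep = 0
    obtain ⟨x, hx0, hxQ⟩ := x
    have hs := Classical.choose_spec (exists_smul_eq_mk_rep F x hx0)
    show Q (Projectivization.mk F x hx0).rep = 0
    rw [← hs, Units.smul_def, QuadraticMap.map_smul]
    simp [hxQ]
  · exact smul_ne_zero (Units.ne_zero _) (rep_nonzero _)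
  · have : Q pc.1.1.rep = 0 := pc.1.2
    rw [QuadraticMap.map_smul, this]; simp
  · rintro ⟨x, hx0, hxQ⟩
    refine Subtype.ext ?_
    show ((Classical.choose (exists_smul_eq_mk_rep F x hx0))⁻¹ : Fˣ) •
      (Projectivization.mk F x hx0).rep = x
    set a := Classical.choose (exists_smul_eq_mk_rep F x hx0) with ha
    have hs : a • x = (Projectivization.mk F x hx0).rep :=
      Classical.choose_spec (exists_smul_eq_mk_rep F x hx0)
    rw [← hs, smul_smul]
    simp
  · rintro ⟨⟨p, hp⟩, c⟩
    have hx0 : (c : F) • p.rep ≠ 0 := smul_ne_zero (Units.ne_zero _) (rep_nonzero _)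
    have hmk : Projectivization.mk F ((c : F) • p.rep) hx0 = p := by
      conv_rhs => rw [← p.mk_rep]
      rw [mk_eq_mk_iff]
      exact ⟨c, rfl⟩
    set a := Classical.choose (exists_smul_eq_mk_rep F ((c : F) • p.rep) hx0) with ha
    have hs : a • ((c : F) • p.rep) = (Projectivization.mk F ((c : F) • p.rep) hx0).rep :=
      Classical.choose_spec (exists_smul_eq_mk_rep F ((c : F) • p.rep) hx0)
    rw [hmk] at hs
    have hac : (a : F) * (c : F) = 1 := by
      have h1 : ((a : F) * (c : F)) • p.rep = (1 : F) • p.rep := by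
        rw [one_smul, ← smul_smul]
        exact hs
      exact smul_left_injective F (rep_nonzero p) h1
    have hinv : a⁻¹ = c := by
      rw [eq_comm, eq_inv_iff_mul_eq_one]
      ext
      simpa [mul_comm] using hac
    refine Prod.ext ?_ ?_
    · exact Subtype.ext hmk
    · exact hinv

lemma zeros_card (Q : QuadraticForm F V)
    (hcard : {p : ℙ F V | Q p.rep = 0}.ncard = 9) :
    Nat.card {x : V // x ≠ 0 ∧ Q x = 0} = 9 * (Fintype.card F - 1) := by
  rw [Nat.card_congr (zerosEquiv Q), Nat.card_prod]
  rw [Nat.card_coe_set_eq, hcard, Nat.card_units, Nat.card_eq_fintype_card]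

end aux

section caseB


variable {F : Type*} [Field F] [Fintype F] [DecidableEq F]

lemma qm_add' {V : Type*} [AddCommGroup V] [Module F V] (Q : QuadraticForm F V) (x y : V) :
    Q (x + y) = Q x + Q y + polar Q x y := by
  simp [polar]

lemma caseB_false
    (Q : QuadraticForm F (Fin 4 → F))
    (hN : Nat.card {x : Fin 4 → F // x ≠ 0 ∧ Q x = 0} = 9 * (Fintype.card F - 1))
    (hB : ¬ ∃ u v : Fin 4 → F, LinearIndependent F ![u, v] ∧ Q u = 0 ∧ Q v = 0
      ∧ polar Q u v = 0) :
    False := by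
  classical
  set q := Fintype.card F with hq
  have hq2 : 2 ≤ q := Fintype.one_lt_card
  -- a nonzero zero exists
  have hpos : Nat.card {x : Fin 4 → F // x ≠ 0 ∧ Q x = 0} ≠ 0 := by
    rw [hN]; omega
  obtain ⟨⟨e, he0, heQ⟩⟩ := (Nat.card_ne_zero.mp hpos).1
  obtain ⟨i₀, hi₀⟩ : ∃ i, e i ≠ 0 := by
    by_contra h
    push_neg at h
    exact he0 (funext h)
  set π : (Fin 4 → F) →ₗ[F] F := (e i₀)⁻¹ • LinearMap.proj i₀ with hπ
  have hπe : π e = 1 := by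
    simp [hπ, LinearMap.proj, inv_mul_cancel₀ hi₀]
  set φ : (Fin 4 → F) →ₗ[F] F := polarBilin Q e with hφdef
  have hφapp : ∀ x, φ x = polar Q e x := fun x => rfl
  have hφe : φ e = 0 := by
    rw [hφapp, polar_self, heQ, smul_zero]
  -- key : zeros in ker φ are in span e
  have hK : ∀ x : Fin 4 → F, Q x = 0 → φ x = 0 → x ∈ Submodule.span F {e} := by
    intro x hxQ hxφ
    by_contra hx
    have hx0 : x ≠ 0 := by
      rintro rfl
      exact hx (Submodule.zero_mem _)
    have hli : LinearIndependent F ![e, x] := by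
      rw [linearIndependent_fin2]
      constructor
      · simpa using hx0
      · intro a ha
        simp only [Matrix.cons_val_one, Matrix.head_cons, Matrix.cons_val_zero] at ha
        rcases eq_or_ne a 0 with rfl | ha0
        · rw [zero_smul] at ha; exact he0 ha.symm
        · apply hx
          rw [Submodule.mem_span_singleton]
          exact ⟨a⁻¹, by rw [← ha, smul_smul, inv_mul_cancel₀ ha0, one_smul]⟩
    exact hB ⟨e, x, hli, heQ, hxQ, (hφapp x) ▸ hxφ⟩
  -- the zero finset
  have hZcard : (univ.filter fun x : Fin 4 → F => x ≠ 0 ∧ Q x = 0).card = 9 * (q - 1) := by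
    rw [← Fintype.card_subtype, ← Nat.card_eq_fintype_card, hN]
  -- span e finset
  have hspan_card : (univ.filter fun x : Fin 4 → F => x ∈ Submodule.span F {e}).card = q := by
    rw [← Fintype.card_subtype]
    have : Fintype.card {x : Fin 4 → F // x ∈ Submodule.span F {e}}
        = Fintype.card (Submodule.span F {e} : Submodule F (Fin 4 → F)) := rfl
    rw [this, Module.card_eq_pow_finrank (K := F), finrank_span_singleton he0, pow_one]
  -- helper: Q (x - s • e) = Q x - s * φ x
  have hQsub : ∀ (x : Fin 4 → F) (s : F), Q (x - s • e) = Q x - s * φ x := by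
    intro x s
    have hx : x - s • e = x + (-s) • e := by
      rw [neg_smul, ← sub_eq_add_neg]
    rw [hx, qm_add', QuadraticMap.map_smul, heQ, polar_smul_right, polar_comm,
      ← hφapp]
    simp only [smul_eq_mul]
    ring
  by_cases hφ0 : φ = 0
  · -- all zeros lie in span e
    have hEq : (univ.filter fun x : Fin 4 → F => x ≠ 0 ∧ Q x = 0)
        = (univ.filter fun x : Fin 4 → F => x ∈ Submodule.span F {e}).erase 0 := by
      ext x
      simp only [mem_filter, mem_univ, true_and, mem_erase]
      constructor
      · rintro ⟨hx0, hxQ⟩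
        refine ⟨hx0, hK x hxQ ?_⟩
        rw [hφ0]; rfl
      · rintro ⟨hx0, hxs⟩
        obtain ⟨c, rfl⟩ := Submodule.mem_span_singleton.mp hxs
        refine ⟨hx0, ?_⟩
        rw [QuadraticMap.map_smul, heQ, smul_zero]
    have h9 : 9 * (q - 1) = q - 1 := by
      rw [← hZcard, hEq, Finset.card_erase_of_mem (by simp [Submodule.zero_mem]), hspan_card]
    omega
  · -- φ ≠ 0
    have hsplit := Finset.card_filter_add_card_filter_not
      (s := univ.filter fun x : Fin 4 → F => x ≠ 0 ∧ Q x = 0) (p := fun x => φ x = 0)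
    -- zeros with φ = 0 : exactly span e minus zero
    have hS0 : ((univ.filter fun x : Fin 4 → F => x ≠ 0 ∧ Q x = 0).filter
        fun x => φ x = 0).card = q - 1 := by
      have hEq : ((univ.filter fun x : Fin 4 → F => x ≠ 0 ∧ Q x = 0).filter
          fun x => φ x = 0)
          = (univ.filter fun x : Fin 4 → F => x ∈ Submodule.span F {e}).erase 0 := by
        ext x
        simp only [mem_filter, mem_univ, true_and, mem_erase]
        constructor
        · rintro ⟨⟨hx0, hxQ⟩, hxφ⟩
          exact ⟨hx0, hK x hxQ hxφ⟩
        · rintro ⟨hx0, hxs⟩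
          obtain ⟨c, rfl⟩ := Submodule.mem_span_singleton.mp hxs
          refine ⟨⟨hx0, ?_⟩, ?_⟩
          · rw [QuadraticMap.map_smul, heQ, smul_zero]
          · rw [_root_.map_smul, hφe, smul_zero]
      rw [hEq, Finset.card_erase_of_mem (by simp [Submodule.zero_mem]), hspan_card]
    -- zeros with φ ≠ 0 : bijection with {d | π d = 0 ∧ φ d ≠ 0}
    have hD : ((univ.filter fun x : Fin 4 → F => x ≠ 0 ∧ Q x = 0).filter
        fun x => ¬ φ x = 0).card
        = (univ.filter fun d : Fin 4 → F => π d = 0 ∧ ¬ φ d = 0).card := by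
      apply Finset.card_bij' (i := fun x _ => x - (π x) • e)
        (j := fun d _ => d - ((φ d)⁻¹ * Q d) • e)
      · intro x hx
        simp only [mem_filter, mem_univ, true_and] at hx ⊢
        constructor
        · rw [_root_.map_sub, _root_.map_smul, hπe, smul_eq_mul, mul_one, sub_self]
        · rw [_root_.map_sub, _root_.map_smul, hφe, smul_zero, sub_zero]
          exact hx.2
      · intro d hd
        simp only [mem_filter, mem_univ, true_and] at hd ⊢
        have hφ' : φ (d - ((φ d)⁻¹ * Q d) • e) = φ d := by
          rw [_root_.map_sub, _root_.map_smul, hφe, smul_zero, sub_zero]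
        refine ⟨⟨?_, ?_⟩, ?_⟩
        · intro h0
          rw [h0, map_zero] at hφ'
          exact hd.2 hφ'.symm
        · rw [hQsub]
          field_simp [hd.2]
          ring
        · rw [hφ']
          exact hd.2
      · intro x hx
        simp only [mem_filter, mem_univ, true_and] at hx
        have hφ' : φ (x - (π x) • e) = φ x := by
          rw [_root_.map_sub, _root_.map_smul, hφe, smul_zero, sub_zero]
        have hQ' : Q (x - (π x) • e) = -(π x) * φ x := by
          rw [hQsub, hx.1.2]
          ring
        rw [hφ', hQ']
        have hs : (φ x)⁻¹ * (-(π x) * φ x) = -(π x) := by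
          field_simp [hx.2]
        rw [hs]
        rw [neg_smul, sub_neg_eq_add, sub_add_cancel]
      · intro d hd
        simp only [mem_filter, mem_univ, true_and] at hd
        have hπ' : π (d - ((φ d)⁻¹ * Q d) • e) = -((φ d)⁻¹ * Q d) := by
          rw [_root_.map_sub, _root_.map_smul, hπe, hd.1, smul_eq_mul, mul_one, zero_sub]
        rw [hπ', neg_smul, sub_neg_eq_add, sub_add_cancel]
    -- counting the target set of the bijection
    have hkerπ : (univ.filter fun d : Fin 4 → F => π d = 0).card = q ^ 3 := by
      have h1 : (univ.filter fun d : Fin 4 → F => π d = 0).card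
          = Fintype.card (LinearMap.ker π) := by
        rw [← Fintype.card_subtype]
        apply Fintype.card_congr
        exact Equiv.subtypeEquivRight (by simp [LinearMap.mem_ker])
      rw [h1, Module.card_eq_pow_finrank (K := F)]
      congr 1
      have hsurj : Function.Surjective π := by
        intro c
        exact ⟨c • e, by rw [_root_.map_smul, hπe, smul_eq_mul, mul_one]⟩
      have := LinearMap.finrank_range_add_finrank_ker π
      rw [LinearMap.range_eq_top.mpr hsurj] at this
      simp only [finrank_top, Module.finrank_self] at this
      have h4 : Module.finrank F (Fin 4 → F) = 4 := by
        simp [Module.finrank_pi]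
      omega
    have hkerφ3 : Module.finrank F (LinearMap.ker φ) = 3 := by
      obtain ⟨y, hy⟩ : ∃ y, φ y ≠ 0 := by
        by_contra h
        push_neg at h
        exact hφ0 (by ext z; simp [h])
      have hsurj : Function.Surjective φ := by
        intro c
        refine ⟨(c * (φ y)⁻¹) • y, ?_⟩
        rw [_root_.map_smul, smul_eq_mul]
        field_simp
      have := LinearMap.finrank_range_add_finrank_ker φ
      rw [LinearMap.range_eq_top.mpr hsurj] at this
      simp only [finrank_top, Module.finrank_self] at this
      have h4 : Module.finrank F (Fin 4 → F) = 4 := by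
        simp [Module.finrank_pi]
      omega
    have hkerπ3 : Module.finrank F (LinearMap.ker π) = 3 := by
      have hsurj : Function.Surjective π := by
        intro c
        exact ⟨c • e, by rw [_root_.map_smul, hπe, smul_eq_mul, mul_one]⟩
      have := LinearMap.finrank_range_add_finrank_ker π
      rw [LinearMap.range_eq_top.mpr hsurj] at this
      simp only [finrank_top, Module.finrank_self] at this
      have h4 : Module.finrank F (Fin 4 → F) = 4 := by
        simp [Module.finrank_pi]
      omega
    -- finrank of the intersection is 2
    have hinf2 : Module.finrank F ((LinearMap.ker π ⊓ LinearMap.ker φ) :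
        Submodule F (Fin 4 → F)) = 2 := by
      have hsum := Submodule.finrank_sup_add_finrank_inf_eq (LinearMap.ker π) (LinearMap.ker φ)
      rw [hkerπ3, hkerφ3] at hsum
      have hsup_le : Module.finrank F ((LinearMap.ker π ⊔ LinearMap.ker φ) :
          Submodule F (Fin 4 → F)) ≤ 4 := by
        have := Submodule.finrank_le ((LinearMap.ker π ⊔ LinearMap.ker φ) :
          Submodule F (Fin 4 → F))
        simpa [Module.finrank_pi] using this
      -- lower bound : finrank inf ≥ 2
      -- upper bound : inf ⊔ span e ≤ ker φ and inf ⊓ span e = ⊥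
      have hdisj : (LinearMap.ker π ⊓ LinearMap.ker φ) ⊓ Submodule.span F {e} = ⊥ := by
        rw [Submodule.eq_bot_iff]
        intro x hx
        rw [Submodule.mem_inf, Submodule.mem_inf] at hx
        obtain ⟨⟨hxπ, -⟩, hx2⟩ := hx
        obtain ⟨c, rfl⟩ := Submodule.mem_span_singleton.mp hx2
        rw [LinearMap.mem_ker, _root_.map_smul, hπe, smul_eq_mul, mul_one] at hxπ
        rw [hxπ, zero_smul]
      have hle : (LinearMap.ker π ⊓ LinearMap.ker φ) ⊔ Submodule.span F {e}
          ≤ LinearMap.ker φ := by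
        apply sup_le inf_le_right
        rw [Submodule.span_le]
        intro z hz
        rw [Set.mem_singleton_iff] at hz
        subst hz
        exact hφe
      have hsum2 := Submodule.finrank_sup_add_finrank_inf_eq
        (LinearMap.ker π ⊓ LinearMap.ker φ) (Submodule.span F {e})
      rw [hdisj, finrank_bot, finrank_span_singleton he0] at hsum2
      have hle3 : Module.finrank F (((LinearMap.ker π ⊓ LinearMap.ker φ)
          ⊔ Submodule.span F {e}) : Submodule F (Fin 4 → F)) ≤ 3 := by
        rw [← hkerφ3]
        exact Submodule.finrank_mono hle
      omega
    have hkerboth : (univ.filter fun d : Fin 4 → F => π d = 0 ∧ φ d = 0).card = q ^ 2 := by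
      have h1 : (univ.filter fun d : Fin 4 → F => π d = 0 ∧ φ d = 0).card
          = Fintype.card ((LinearMap.ker π ⊓ LinearMap.ker φ) : Submodule F (Fin 4 → F)) := by
        rw [← Fintype.card_subtype]
        apply Fintype.card_congr
        exact Equiv.subtypeEquivRight (by simp [Submodule.mem_inf, LinearMap.mem_ker])
      rw [h1, Module.card_eq_pow_finrank (K := F), hinf2]
    have hDsplit := Finset.card_filter_add_card_filter_not
      (s := univ.filter fun d : Fin 4 → F => π d = 0) (p := fun d => φ d = 0)
    rw [Finset.filter_filter, Finset.filter_filter, hkerπ] at hDsplit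
    have hDcard : (univ.filter fun d : Fin 4 → F => π d = 0 ∧ ¬ φ d = 0).card
        = q ^ 3 - q ^ 2 := by
      have : (univ.filter fun d : Fin 4 → F => π d = 0 ∧ φ d = 0).card
          = q ^ 2 := hkerboth
      omega
    -- final equation
    clear_value q
    rw [hS0, hD, hDcard, hZcard] at hsplit
    -- hsplit : (q - 1) + (q^3 - q^2) = 9 * (q - 1)
    have hge : q ^ 2 ≤ q ^ 3 := Nat.pow_le_pow_right (by omega) (by omega)
    have hq1 : (1:ℕ) ≤ q := by omega
    zify [hge, hq1] at hsplit
    have hcase : q = 2 ∨ 3 ≤ q := by omega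
    rcases hcase with h2 | h3
    · rw [h2] at hsplit
      norm_num at hsplit
    · have h3' : (3:ℤ) ≤ (q:ℤ) := by exact_mod_cast h3
      have hprod : ((q:ℤ) - 1) * ((q:ℤ)*(q:ℤ) - 8) = 0 := by linear_combination hsplit
      rcases mul_eq_zero.mp hprod with h | h
      · linarith
      · have h9 : (9:ℤ) ≤ (q:ℤ)*(q:ℤ) := by
          have := mul_le_mul h3' h3' (by norm_num) (by linarith)
          linarith
        linarith

end caseB

section caseA


variable {F : Type*} [Field F] [Fintype F] [DecidableEq F]

lemma qm_add'' {V : Type*} [AddCommGroup V] [Module F V] (Q : QuadraticForm F V) (x y : V) :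
    Q (x + y) = Q x + Q y + polar Q x y := by
  simp [polar]

lemma count_lin' (s₁ s₂ c : F) (h : ¬ (s₁ = 0 ∧ s₂ = 0)) :
    (univ.filter fun ab : F × F => ab.1 * s₁ + ab.2 * s₂ + c = 0).card = Fintype.card F := by
  rw [← Fintype.card_subtype]
  rcases not_and_or.mp h with h1 | h2
  · exact Fintype.card_congr
      { toFun := fun x => x.1.2
        invFun := fun b => ⟨(-(b*s₂+c) * s₁⁻¹, b), by field_simp; ring⟩
        left_inv := by
          rintro ⟨⟨a, b⟩, hab⟩
          ext <;> simp_all <;> field_simp <;> linear_combination -hab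
        right_inv := fun b => rfl }
  · exact Fintype.card_congr
      { toFun := fun x => x.1.1
        invFun := fun a => ⟨(a, -(a*s₁+c) * s₂⁻¹), by field_simp; ring⟩
        left_inv := by
          rintro ⟨⟨a, b⟩, hab⟩
          ext <;> simp_all <;> field_simp <;> linear_combination -hab
        right_inv := fun a => rfl }

lemma arith0 (q j : ℕ) (hq2 : 2 ≤ q) (hj1 : 1 ≤ j) (hjb : j ≤ 1)
    (hsum : 9*(q-1)+1 = j*(q*q) + (q*q - 1)*q) : q = 2 := by
  have hjeq : j = 1 := le_antisymm hjb hj1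
  subst hjeq
  have h1q : 1 ≤ q := by omega
  have h1qq : 1 ≤ q * q := Nat.mul_le_mul h1q h1q
  zify [h1q, h1qq] at hsum
  have hprod : ((q:ℤ) - 2) * (((q:ℤ) - 1) * ((q:ℤ) + 4)) = 0 := by linear_combination -hsum
  have hq2' : (2:ℤ) ≤ (q:ℤ) := by exact_mod_cast hq2
  rcases mul_eq_zero.mp hprod with h | h
  · have hqz : (q:ℤ) = 2 := by linarith
    exact_mod_cast hqz
  · exfalso
    rcases mul_eq_zero.mp h with h' | h' <;> linarith

lemma arith1 (q j : ℕ) (hq2 : 2 ≤ q) (hj1 : 1 ≤ j)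
    (hsum : 9*(q-1)+1 = j*(q*q) + (q*q - q)*q) : False := by
  have h1q : 1 ≤ q := by omega
  have hqq : q ≤ q * q := Nat.le_mul_of_pos_left q (by omega)
  zify [h1q, hqq] at hsum
  have hq2' : (2:ℤ) ≤ (q:ℤ) := by exact_mod_cast hq2
  have hj1' : (1:ℤ) ≤ (j:ℤ) := by exact_mod_cast hj1
  rcases (by omega : q = 2 ∨ 3 ≤ q) with h2 | h3
  · have hqz : (q:ℤ) = 2 := by exact_mod_cast h2
    rw [hqz] at hsum
    omega
  · have h3' : (3:ℤ) ≤ (q:ℤ) := by exact_mod_cast h3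
    have h9 : (9:ℤ) ≤ (q:ℤ)*(q:ℤ) := by nlinarith
    have hjq : (q:ℤ)*(q:ℤ) ≤ (j:ℤ)*((q:ℤ)*(q:ℤ)) := by nlinarith
    nlinarith [hsum, h9, hjq, h3',
      mul_nonneg (by linarith : (0:ℤ) ≤ (q:ℤ)) (by linarith : (0:ℤ) ≤ (q:ℤ)*(q:ℤ) - 9)]

lemma arith2 (q j : ℕ) (hq2 : 2 ≤ q) (hj1 : 1 ≤ j)
    (hsum : 9*(q-1)+1 = j*(q*q)) : j = 1 := by
  have hq8 : q ≤ 8 := by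
    by_contra hgt
    push_neg at hgt
    have h9 : 9 ≤ q := hgt
    have e1 : 9 * q ≤ q * q := Nat.mul_le_mul h9 (le_refl q)
    have e2 : 1 * (q * q) ≤ j * (q * q) := Nat.mul_le_mul hj1 (le_refl _)
    omega
  interval_cases q <;> omega

lemma caseA
    (Q : QuadraticForm F (Fin 4 → F))
    (hline : ¬ ∃ W : Submodule F (Fin 4 → F), Module.finrank F W = 2 ∧
        ∀ p ∈ {p : Projectivization F (Fin 4 → F) | Q p.rep = 0}, p.rep ∈ W)
    (hN : Nat.card {x : Fin 4 → F // x ≠ 0 ∧ Q x = 0} = 9 * (Fintype.card F - 1))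
    (u v : Fin 4 → F) (hli : LinearIndependent F ![u, v])
    (hu : Q u = 0) (hv : Q v = 0) (huv : polar Q u v = 0) :
    Fintype.card F = 2 := by
  classical
  set q := Fintype.card F with hq
  have hq2 : 2 ≤ q := Fintype.one_lt_card
  -- the span of u, v
  set L : Submodule F (Fin 4 → F) := Submodule.span F {u, v} with hLdef
  have hL2 : Module.finrank F L = 2 := by
    have hr : Set.range ![u, v] = {u, v} := Matrix.range_cons_cons_empty u v ![]
    have h2 := finrank_span_eq_card hli
    rw [hr] at h2
    simpa using h2
  -- complement and its basis
  obtain ⟨Cp, hCp⟩ := Submodule.exists_isCompl L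
  have hC2 : Module.finrank F Cp = 2 := by
    have h4 : Module.finrank F (Fin 4 → F) = 4 := by simp
    have := Submodule.finrank_add_eq_of_isCompl hCp
    omega
  set wb := Module.finBasisOfFinrankEq F Cp hC2 with hwb
  set w₁ : Fin 4 → F := (wb 0 : Fin 4 → F) with hw₁
  set w₂ : Fin 4 → F := (wb 1 : Fin 4 → F) with hw₂
  -- parametrization
  set Γ : (F × F) × (F × F) → (Fin 4 → F) :=
    fun p => (p.1.1 • u + p.1.2 • v) + (p.2.1 • w₁ + p.2.2 • w₂) with hΓ
  have hwmem : ∀ zt : F × F, zt.1 • w₁ + zt.2 • w₂ ∈ Cp := fun zt =>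
    Submodule.add_mem _ (Submodule.smul_mem _ _ (wb 0).2) (Submodule.smul_mem _ _ (wb 1).2)
  have humem : ∀ ab : F × F, ab.1 • u + ab.2 • v ∈ L := by
    intro ab
    rw [hLdef]
    exact Submodule.mem_span_pair.mpr ⟨ab.1, ab.2, rfl⟩
  -- injectivity of Γ
  have hker : ∀ p : (F × F) × (F × F), Γ p = 0 → p = 0 := by
    rintro ⟨⟨a, b⟩, ⟨z, t⟩⟩ hp
    have h1 : a • u + b • v = -(z • w₁ + t • w₂) := by
      rw [hΓ] at hp
      simp only at hp
      linear_combination (norm := module) hp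
    have hmem : a • u + b • v ∈ L ⊓ Cp := by
      constructor
      · exact humem (a, b)
      · rw [h1]
        exact Submodule.neg_mem _ (hwmem (z, t))
    rw [hCp.inf_eq_bot, Submodule.mem_bot] at hmem
    have hmem2 : z • w₁ + t • w₂ = 0 := by
      have h2 := h1.symm
      rw [hmem] at h2
      have h3 : -(z • w₁ + t • w₂) = 0 := h2
      rw [neg_eq_zero] at h3
      exact h3
    -- coefficients vanish
    have hab : a = 0 ∧ b = 0 := by
      have := Fintype.linearIndependent_iff.mp hli ![a, b] ?_ 
      · exact ⟨this 0, this 1⟩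
      · rw [Fin.sum_univ_two]
        simpa using hmem
    have hwli : LinearIndependent F ![w₁, w₂] := by
      have h0 : LinearIndependent F (fun i : Fin 2 => ((wb i : Cp) : Fin 4 → F)) :=
        (wb.linearIndependent).map' (Submodule.subtype Cp) (Submodule.ker_subtype Cp)
      have : ![w₁, w₂] = fun i : Fin 2 => ((wb i : Cp) : Fin 4 → F) := by
        funext i
        fin_cases i <;> rfl
      rwa [this]
    have hzt : z = 0 ∧ t = 0 := by
      have := Fintype.linearIndependent_iff.mp hwli ![z, t] ?_ 
      · exact ⟨this 0, this 1⟩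
      · rw [Fin.sum_univ_two]
        simpa using hmem2
    simp [Prod.ext_iff, hab.1, hab.2, hzt.1, hzt.2]
  have hinj : Function.Injective Γ := by
    intro p p' hpp
    have hdiff : Γ (p - p') = 0 := by
      rw [hΓ]
      simp only [Prod.fst_sub, Prod.snd_sub, sub_smul]
      rw [hΓ] at hpp
      simp only at hpp
      linear_combination (norm := module) hpp
    have := hker _ hdiff
    rwa [sub_eq_zero] at this
  have hbij : Function.Bijective Γ := by
    rw [Fintype.bijective_iff_injective_and_card]
    refine ⟨hinj, ?_⟩
    simp only [Fintype.card_prod, Fintype.card_fun, Fintype.card_fin]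
    ring
  -- expansion constants
  set A := polar Q u w₁
  set B := polar Q u w₂
  set C2 := polar Q v w₁
  set D2 := polar Q v w₂
  set E := Q w₁
  set G := Q w₂
  set H := polar Q w₁ w₂
  set hfun : F × F → F := fun zt => zt.1*zt.1*E + zt.1*zt.2*H + zt.2*zt.2*G with hhfun
  have hexp : ∀ p : (F × F) × (F × F),
      Q (Γ p) = p.1.1 * (p.2.1*A + p.2.2*B) + p.1.2 * (p.2.1*C2 + p.2.2*D2) + hfun p.2 := by
    rintro ⟨⟨a, b⟩, ⟨z, t⟩⟩
    show Q ((a • u + b • v) + (z • w₁ + t • w₂)) = _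
    rw [qm_add'', qm_add'' Q (a • u), qm_add'' Q (z • w₁)]
    simp only [QuadraticMap.map_smul, polar_add_left, polar_smul_left, polar_add_right,
      polar_smul_right, smul_eq_mul, hu, hv, huv]
    rw [hhfun]
    simp only [hfun]
    ring
  -- the linear map ν
  set ν : (F × F) →ₗ[F] (F × F) :=
    ((A • LinearMap.fst F F F) + (B • LinearMap.snd F F F)).prod
      ((C2 • LinearMap.fst F F F) + (D2 • LinearMap.snd F F F)) with hν
  have hνapp : ∀ zt : F × F, ν zt = (zt.1*A + zt.2*B, zt.1*C2 + zt.2*D2) := by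
    intro zt
    simp only [hν, LinearMap.prod_apply, Pi.prod, LinearMap.add_apply, LinearMap.smul_apply,
      LinearMap.fst_apply, LinearMap.snd_apply, smul_eq_mul]
    rw [Prod.mk.injEq]
    constructor <;> ring_nf <;> simp [mul_comm]
  -- global zero count
  have hZcard : (univ.filter fun x : Fin 4 → F => x ≠ 0 ∧ Q x = 0).card = 9 * (q - 1) := by
    rw [← Fintype.card_subtype, ← Nat.card_eq_fintype_card, hN]
  have hZ0 : (univ.filter fun x : Fin 4 → F => Q x = 0).card = 9 * (q - 1) + 1 := by
    have hins : (univ.filter fun x : Fin 4 → F => Q x = 0)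
        = insert 0 (univ.filter fun x : Fin 4 → F => x ≠ 0 ∧ Q x = 0) := by
      ext x
      simp only [mem_filter, mem_univ, true_and, mem_insert]
      constructor
      · intro hx
        rcases eq_or_ne x 0 with rfl | h
        · exact Or.inl rfl
        · exact Or.inr ⟨h, hx⟩
      · rintro (rfl | ⟨-, hx⟩)
        · simp
        · exact hx
    rw [hins, card_insert_of_notMem (by simp), hZcard]
  -- transfer along Γ
  have htrans : (univ.filter fun p : (F × F) × (F × F) => Q (Γ p) = 0).card
      = 9 * (q - 1) + 1 := by
    rw [← hZ0]
    apply Finset.card_bij (i := fun p _ => Γ p)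
    · intro p hp
      simp only [mem_filter, mem_univ, true_and] at hp ⊢
      exact hp
    · intro p hp p' hp' h
      exact hinj h
    · intro x hx
      obtain ⟨p, rfl⟩ := hbij.2 x
      exact ⟨p, by simpa using hx, rfl⟩
  -- fiberwise decomposition
  have hfiber : (univ.filter fun p : (F × F) × (F × F) => Q (Γ p) = 0).card
      = ∑ zt : F × F, ((univ.filter fun ab : F × F => Q (Γ (ab, zt)) = 0)).card := by
    rw [Finset.card_eq_sum_card_fiberwise (f := Prod.snd) (t := univ) (fun x _ => mem_univ _)]
    apply Finset.sum_congr rfl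
    intro zt _
    apply Finset.card_bij (i := fun p _ => p.1)
    · intro p hp
      simp only [mem_filter, mem_univ, true_and] at hp ⊢
      rw [show ((p.1, zt) : (F × F) × (F × F)) = p by rw [← hp.2]]
      exact hp.1
    · intro p hp p' hp' h
      simp only [mem_filter, mem_univ, true_and] at hp hp'
      exact Prod.ext h (hp.2.trans hp'.2.symm)
    · intro ab hab
      refine ⟨(ab, zt), ?_, rfl⟩
      simp only [mem_filter, mem_univ, true_and] at hab ⊢
      exact ⟨hab, trivial⟩
  -- evaluation of each fiber
  have hfibval : ∀ zt : F × F,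
      ((univ.filter fun ab : F × F => Q (Γ (ab, zt)) = 0)).card
      = if ν zt = 0 then (if hfun zt = 0 then q * q else 0) else q := by
    intro zt
    have hpred : (univ.filter fun ab : F × F => Q (Γ (ab, zt)) = 0)
        = (univ.filter fun ab : F × F =>
            ab.1 * (zt.1*A + zt.2*B) + ab.2 * (zt.1*C2 + zt.2*D2) + hfun zt = 0) := by
      apply Finset.filter_congr
      intro ab _
      rw [hexp ⟨ab, zt⟩]
    rw [hpred]
    by_cases h0 : ν zt = 0
    · rw [if_pos h0]
      have h00 : zt.1*A + zt.2*B = 0 ∧ zt.1*C2 + zt.2*D2 = 0 := by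
        simpa [Prod.ext_iff] using (hνapp zt).symm.trans h0
      by_cases hc : hfun zt = 0
      · rw [if_pos hc]
        have hall : (univ.filter fun ab : F × F =>
            ab.1 * (zt.1*A + zt.2*B) + ab.2 * (zt.1*C2 + zt.2*D2) + hfun zt = 0) = univ := by
          apply Finset.filter_true_of_mem
          intro ab _
          rw [h00.1, h00.2, hc]
          ring
        rw [hall]
        simp [hq]
      · rw [if_neg hc]
        have hnone : (univ.filter fun ab : F × F =>
            ab.1 * (zt.1*A + zt.2*B) + ab.2 * (zt.1*C2 + zt.2*D2) + hfun zt = 0) = ∅ := by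
          apply Finset.filter_false_of_mem
          intro ab _
          rw [h00.1, h00.2]
          simpa using hc
        rw [hnone]
        simp
    · rw [if_neg h0]
      have hne : ¬ (zt.1*A + zt.2*B = 0 ∧ zt.1*C2 + zt.2*D2 = 0) := by
        intro hcon
        apply h0
        rw [hνapp zt, hcon.1, hcon.2]
        rfl
      rw [hq]
      exact count_lin' _ _ _ hne
  -- assemble the sum
  set bad := univ.filter (fun zt : F × F => ν zt = 0) with hbad
  set j := (bad.filter (fun zt => hfun zt = 0)).card with hj
  have hsum : 9 * (q - 1) + 1 = j * (q*q) + (q*q - bad.card) * q := by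
    rw [← htrans, hfiber]
    rw [Finset.sum_congr rfl (fun zt _ => hfibval zt)]
    rw [← Finset.sum_filter_add_sum_filter_not univ (fun zt : F × F => ν zt = 0)]
    congr 1
    · rw [Finset.sum_congr rfl (fun zt hzt => if_pos (mem_filter.mp hzt).2), ← hbad]
      rw [← Finset.sum_filter]
      rw [Finset.sum_const, ← hj, smul_eq_mul]
    · rw [Finset.sum_congr rfl (fun zt hzt => if_neg (mem_filter.mp hzt).2)]
      rw [Finset.sum_const, smul_eq_mul]
      congr 1
      have hsplit := Finset.card_filter_add_card_filter_not
        (s := (univ : Finset (F × F))) (p := fun zt => ν zt = 0)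
      have hcardu : (univ : Finset (F × F)).card = q * q := by
        simp [hq]
      rw [← hbad] at hsplit
      omega
  -- bad is the kernel of ν
  have hbadcard : bad.card = q ^ Module.finrank F (LinearMap.ker ν) := by
    rw [hbad, ← Fintype.card_subtype]
    have hcongr : Fintype.card {zt : F × F // ν zt = 0}
        = Fintype.card (LinearMap.ker ν) :=
      Fintype.card_congr (Equiv.subtypeEquivRight (by simp [LinearMap.mem_ker]))
    rw [hcongr, Module.card_eq_pow_finrank (K := F), hq]
  have hdle : Module.finrank F (LinearMap.ker ν) ≤ 2 := by
    have h := Submodule.finrank_le (LinearMap.ker ν)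
    have h2 : Module.finrank F (F × F) = 2 := by
      simp
    omega
  have hj1 : 1 ≤ j := by
    rw [hj]
    refine Finset.card_pos.mpr ⟨0, ?_⟩
    rw [mem_filter, hbad, mem_filter]
    refine ⟨⟨mem_univ _, map_zero ν⟩, ?_⟩
    show (0:F) * 0 * E + 0 * 0 * H + 0 * 0 * G = 0
    ring
  have hjb : j ≤ bad.card := Finset.card_filter_le _ _
  have h1q : 1 ≤ q := by omega
  have hd : Module.finrank F (LinearMap.ker ν) = 0 ∨ Module.finrank F (LinearMap.ker ν) = 1
      ∨ Module.finrank F (LinearMap.ker ν) = 2 := by omega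
  rcases hd with hd0 | hd1 | hd2
  · -- dim 0 : conclude q = 2
    rw [hd0, pow_zero] at hbadcard
    rw [hbadcard] at hsum hjb
    exact arith0 q j hq2 hj1 hjb hsum
  · -- dim 1 : contradiction
    exfalso
    rw [hd1, pow_one] at hbadcard
    rw [hbadcard] at hsum
    exact arith1 q j hq2 hj1 hsum
  · -- dim 2 : forces q = 8 and the zero set is the line L, contradiction with hline
    exfalso
    have hFF : Module.finrank F (F × F) = 2 := by simp
    have hker_top : LinearMap.ker ν = ⊤ := by
      apply Submodule.eq_top_of_finrank_eq
      rw [hd2, hFF]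
    rw [hd2, pow_two] at hbadcard
    rw [hbadcard] at hsum
    have hsum2 : 9 * (q - 1) + 1 = j * (q * q) := by
      rw [Nat.sub_self, zero_mul, add_zero] at hsum
      exact hsum
    have hjone : j = 1 := arith2 q j hq2 hj1 hsum2
    -- contradiction with hline
    apply hline
    refine ⟨L, hL2, ?_⟩
    intro p hp
    have hQrep : Q p.rep = 0 := hp
    obtain ⟨pp, hpp⟩ := hbij.2 p.rep
    have hν0 : ν pp.2 = 0 := by
      have hm : pp.2 ∈ LinearMap.ker ν := by
        rw [hker_top]
        trivial
      simpa [LinearMap.mem_ker] using hm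
    have h00 : pp.2.1*A + pp.2.2*B = 0 ∧ pp.2.1*C2 + pp.2.2*D2 = 0 := by
      simpa [Prod.ext_iff] using (hνapp pp.2).symm.trans hν0
    have hfz : hfun pp.2 = 0 := by
      have hh := hexp pp
      rw [hpp, hQrep] at hh
      rw [h00.1, h00.2] at hh
      simpa using hh.symm
    have hmemf : pp.2 ∈ bad.filter (fun zt => hfun zt = 0) := by
      rw [mem_filter, hbad, mem_filter]
      exact ⟨⟨mem_univ _, hν0⟩, hfz⟩
    have h0mem : (0 : F × F) ∈ bad.filter (fun zt => hfun zt = 0) := by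
      rw [mem_filter, hbad, mem_filter]
      refine ⟨⟨mem_univ _, map_zero ν⟩, ?_⟩
      show (0:F) * 0 * E + 0 * 0 * H + 0 * 0 * G = 0
      ring
    obtain ⟨a, ha⟩ := Finset.card_eq_one.mp (hj ▸ hjone : (bad.filter (fun zt => hfun zt = 0)).card = 1)
    rw [ha, Finset.mem_singleton] at hmemf h0mem
    have hzt0 : pp.2 = 0 := hmemf.trans h0mem.symm
    have hΓL : Γ pp = pp.1.1 • u + pp.1.2 • v := by
      rw [hΓ]
      simp only
      rw [hzt0]
      simp
    rw [← hpp, hΓL]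
    exact humem pp.1

end caseA

/-- Point-counting core of the paper's Theorem on identifiable Waring hyperplanes: if the
projective zero locus `Z` of a nonzero quadratic form on `F⁴` has exactly nine points and
the nine points are not all on one projective line, then `|F| = 2`. -/
theorem stmt15 (F : Type*) [Field F] [Fintype F]
    (Q : QuadraticForm F (Fin 4 → F)) (hQ : Q ≠ 0)
    (hcard : {p : Projectivization F (Fin 4 → F) | Q p.rep = 0}.ncard = 9)
    (hline : ¬ ∃ W : Submodule F (Fin 4 → F), Module.finrank F W = 2 ∧
        ∀ p ∈ {p : Projectivization F (Fin 4 → F) | Q p.rep = 0}, p.rep ∈ W) :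
    Fintype.card F = 2 := by
  classical
  have hN : Nat.card {x : Fin 4 → F // x ≠ 0 ∧ Q x = 0} = 9 * (Fintype.card F - 1) :=
    zeros_card Q hcard
  by_cases hA : ∃ u v : Fin 4 → F, LinearIndependent F ![u, v] ∧ Q u = 0 ∧ Q v = 0
      ∧ polar Q u v = 0
  · obtain ⟨u, v, hli, hu, hv, huv⟩ := hA
    exact caseA Q hline hN u v hli hu hv huv
  · exact (caseB_false Q hN hA).elim
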